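/- arXiv:quant-ph/0211121 — 3 statements merged into one kernel-verified Lean document; each statement's English description precedes it below -/
import Mathlib

section
/- Necessity of complementary slackness: Let X̂ be a Hermitian n×n matrix and δ̂ a real number with X̂ − p_i ρ_i positive semidefinite for every 1 ≤ i ≤ m and X̂ − δ̂Δ positive semidefinite, and let {Π̂_i}_{i=0}^m be a measurement with P_I({Π̂_i}) = β such that P_D({Π̂_i}) = Tr(X̂) − δ̂β. Then (X̂ − p_i ρ_i)Π̂_i = 0 for every 1 ≤ i ≤ m and (X̂ − δ̂Δ)Π̂_0 = 0. -/
open Matrix BigOperators ComplexOrder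

open scoped MatrixOrder in
lemma psd_trace_mul_nonneg {k : ℕ} {A B : Matrix (Fin k) (Fin k) ℂ}
    (hA : A.PosSemidef) (hB : B.PosSemidef) :
    0 ≤ (A * B).trace ∧ ((A * B).trace = 0 → A * B = 0) := by
  set S := CFC.sqrt A with hS
  set T := CFC.sqrt B with hT
  have hSh : Sᴴ = S := (CFC.sqrt_nonneg A).posSemidef.1
  have hTh : Tᴴ = T := (CFC.sqrt_nonneg B).posSemidef.1
  have hSS : S * S = A := CFC.sqrt_mul_sqrt_self A hA.nonneg
  have hTT : T * T = B := CFC.sqrt_mul_sqrt_self B hB.nonneg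
  set M := T * S with hM
  have htr : (A * B).trace = (Mᴴ * M).trace := by
    have : Mᴴ * M = S * (T * T) * S := by
      simp [hM, conjTranspose_mul, hSh, hTh, Matrix.mul_assoc]
    rw [this]
    have e : S * (T * T) * S = S * ((T * T) * S) := by rw [Matrix.mul_assoc]
    rw [e, trace_mul_comm S, Matrix.mul_assoc (T * T) S S, hSS, hTT, trace_mul_comm]
  have htr2 : (Mᴴ * M).trace = ∑ j, ∑ i, star (M i j) * M i j := by
    simp [Matrix.trace, Matrix.diag, Matrix.mul_apply, conjTranspose_apply]
  have hnn : 0 ≤ (Mᴴ * M).trace := by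
    rw [htr2]
    exact Finset.sum_nonneg fun j _ => Finset.sum_nonneg fun i _ => star_mul_self_nonneg _
  constructor
  · rw [htr]; exact hnn
  · intro h0
    rw [htr, htr2] at h0
    have hMz : M = 0 := by
      ext i j
      have h1 := (Finset.sum_eq_zero_iff_of_nonneg
        (fun j _ => Finset.sum_nonneg fun i _ => star_mul_self_nonneg (M i j))).mp h0 j
        (Finset.mem_univ j)
      have h2 := (Finset.sum_eq_zero_iff_of_nonneg
        (fun i _ => star_mul_self_nonneg (M i j))).mp h1 i (Finset.mem_univ i)
      have : Complex.normSq (M i j) = 0 := by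
        have := congrArg Complex.re h2
        simpa [Complex.star_def, Complex.mul_re, Complex.normSq] using this
      simpa using Complex.normSq_eq_zero.mp this
    have hST : S * T = 0 := by
      have := congrArg conjTranspose hMz
      simpa [hM, conjTranspose_mul, hSh, hTh] using this
    calc A * B = S * (S * T) * T := by
          rw [← hSS, ← hTT, Matrix.mul_assoc, Matrix.mul_assoc, Matrix.mul_assoc]
    _ = 0 := by rw [hST]; simp
/-- Necessity of complementary slackness: if a dual feasible pair (X̂, δ̂) and a
measurement with P_I = β attain equality P_D = Tr(X̂) − δ̂β, then the
complementary slackness conditions hold. -/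
theorem stmt_3 {n m : ℕ}
    (ρ : Fin m → Matrix (Fin n) (Fin n) ℂ) (p : Fin m → ℝ)
    (hρpsd : ∀ i, (ρ i).PosSemidef) (hρtr : ∀ i, (ρ i).trace = 1)
    (hp : ∀ i, 0 < p i) (hpsum : ∑ i, p i = 1)
    (Δ : Matrix (Fin n) (Fin n) ℂ) (hΔ : Δ = ∑ i, (p i : ℂ) • ρ i)
    -- the dual feasible point
    (X : Matrix (Fin n) (Fin n) ℂ) (hX : X.IsHermitian) (δ : ℝ)
    (hfeas1 : ∀ i, (X - (p i : ℂ) • ρ i).PosSemidef)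
    (hfeas2 : (X - (δ : ℂ) • Δ).PosSemidef)
    -- a measurement with P_I = β attaining the dual value
    (β : ℝ)
    (M0 : Matrix (Fin n) (Fin n) ℂ) (M : Fin m → Matrix (Fin n) (Fin n) ℂ)
    (hM0 : M0.PosSemidef) (hM : ∀ i, (M i).PosSemidef)
    (hMsum : M0 + ∑ i, M i = 1)
    (hPI : (Δ * M0).trace = (β : ℂ))
    (hPD : ∑ i, p i * ((ρ i * M i).trace).re = X.trace.re - δ * β) :
    (∀ i, (X - (p i : ℂ) • ρ i) * M i = 0) ∧ (X - (δ : ℂ) • Δ) * M0 = 0 := by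
  set t0 : ℂ := ((X - (δ : ℂ) • Δ) * M0).trace with ht0
  set t : Fin m → ℂ := fun i => ((X - (p i : ℂ) • ρ i) * M i).trace with htdef
  have key0 := psd_trace_mul_nonneg hfeas2 hM0
  have keyi := fun i => psd_trace_mul_nonneg (hfeas1 i) (hM i)
  -- trace accounting
  have h1 : X.trace = (X * M0).trace + ∑ i, (X * M i).trace := by
    have : X = X * M0 + ∑ i, X * M i := by
      rw [← Finset.mul_sum, ← Matrix.mul_add, hMsum, Matrix.mul_one]
    conv_lhs => rw [this]
    rw [trace_add, trace_sum]
  have h2 : (X * M0).trace = t0 + (δ : ℂ) * (β : ℂ) := by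
    rw [ht0, Matrix.sub_mul, trace_sub, Matrix.smul_mul, trace_smul, smul_eq_mul, hPI]
    ring
  have h3 : ∀ i, (X * M i).trace = t i + (p i : ℂ) * (ρ i * M i).trace := by
    intro i
    show (X * M i).trace = ((X - (p i : ℂ) • ρ i) * M i).trace + (p i : ℂ) * (ρ i * M i).trace
    rw [Matrix.sub_mul, trace_sub, Matrix.smul_mul, trace_smul, smul_eq_mul]
    ring
  have h4 : X.trace = t0 + (δ : ℂ) * (β : ℂ)
      + (∑ i, t i + ∑ i, (p i : ℂ) * (ρ i * M i).trace) := by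
    rw [h1, h2, Finset.sum_congr rfl (fun i _ => h3 i), Finset.sum_add_distrib]
  -- take real parts
  have h5 : X.trace.re = t0.re + δ * β + (∑ i, (t i).re + ∑ i, p i * ((ρ i * M i).trace).re) := by
    have := congrArg Complex.re h4
    simpa [Complex.add_re, Complex.mul_re, Complex.re_sum] using this
  have h6 : t0.re + ∑ i, (t i).re = 0 := by
    rw [hPD] at h5; linarith
  have h0nn : 0 ≤ t0.re := (Complex.nonneg_iff.mp key0.1).1
  have hinn : ∀ i, 0 ≤ (t i).re := fun i => (Complex.nonneg_iff.mp (keyi i).1).1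
  have hsum_nn : 0 ≤ ∑ i, (t i).re := Finset.sum_nonneg fun i _ => hinn i
  have h0z : t0.re = 0 := by linarith
  have hsz : ∑ i, (t i).re = 0 := by linarith
  have hiz : ∀ i, (t i).re = 0 := by
    intro i
    exact (Finset.sum_eq_zero_iff_of_nonneg (fun i _ => hinn i)).mp hsz i (Finset.mem_univ i)
  have ht0z : t0 = 0 := by
    apply Complex.ext h0z
    simpa [ht0] using (Complex.nonneg_iff.mp key0.1).2.symm
  have htiz : ∀ i, t i = 0 := by
    intro i
    apply Complex.ext (hiz i)
    simpa [htdef] using (Complex.nonneg_iff.mp (keyi i).1).2.symm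
  exact ⟨fun i => (keyi i).2 (htiz i), key0.2 ht0z⟩
end

section
/- Theorem (sufficient condition for optimality of the SIM): Let ρ_i = φ_i φ_i^* be mixed states with prior probabilities p_i, let λ_min be the smallest eigenvalue of Δ, let β satisfy 1 − nλ_min ≤ β < 1, and let γ = √((1−β)/n). If there is a constant α such that ψ_i^* Δ^{-1} ψ_i = α I_{r_i} for every 1 ≤ i ≤ m, then the SIM {Σ_i}_{i=0}^m is a measurement with P_I({Σ_i}) = β, and it maximizes the probability of correct detection subject to this inconclusive rate: P_D({Π_i}) ≤ P_D({Σ_i}) for every measurement {Π_i}_{i=0}^m with P_I({Π_i}) = β. -/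
open Matrix BigOperators ComplexOrder
set_option maxHeartbeats 1000000

lemma myPSDsum {k : ℕ} {ι : Type*} (s : Finset ι) (f : ι → Matrix (Fin k) (Fin k) ℂ)
    (h : ∀ i ∈ s, (f i).PosSemidef) : (∑ i ∈ s, f i).PosSemidef := by
  classical
  induction s using Finset.induction_on with
  | empty => simpa using Matrix.PosSemidef.zero
  | insert a s hnotmem ih =>
    rw [Finset.sum_insert hnotmem]
    exact (h _ (Finset.mem_insert_self _ _)).add (ih fun i hi => h i (Finset.mem_insert_of_mem hi))

lemma myDiagNonneg {k : ℕ} {A : Matrix (Fin k) (Fin k) ℂ} (hA : A.PosSemidef) (i : Fin k) :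
    0 ≤ A i i := by
  have := hA.dotProduct_mulVec_nonneg (Pi.single i 1)
  simpa [Matrix.mulVec_single, dotProduct, Pi.single_apply] using this

lemma myTraceNonneg {k : ℕ} {A : Matrix (Fin k) (Fin k) ℂ} (hA : A.PosSemidef) :
    0 ≤ A.trace := by
  rw [Matrix.trace]
  exact Finset.sum_nonneg fun i _ => myDiagNonneg hA i

lemma myTraceMulNonneg {k : ℕ} {A B : Matrix (Fin k) (Fin k) ℂ}
    (hA : A.PosSemidef) (hB : B.PosSemidef) : 0 ≤ (A * B).trace := by
  open scoped MatrixOrder Matrix.Norms.L2Operator in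
  obtain ⟨C, hC⟩ := CStarAlgebra.nonneg_iff_eq_star_mul_self.mp hB.nonneg
  rw [Matrix.star_eq_conjTranspose] at hC
  subst hC
  have h : (A * (Cᴴ * C)).trace = (C * A * Cᴴ).trace := by
    rw [← Matrix.mul_assoc, Matrix.trace_mul_comm, Matrix.mul_assoc]
  rw [h]
  exact myTraceNonneg (hA.mul_mul_conjTranspose_same C)

lemma mySmulPSD {k : ℕ} {A : Matrix (Fin k) (Fin k) ℂ} (hA : A.PosSemidef) {c : ℝ} (hc : 0 ≤ c) :
    ((c : ℂ) • A).PosSemidef := by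
  rw [Matrix.posSemidef_iff_dotProduct_mulVec]
  constructor
  · unfold Matrix.IsHermitian
    rw [Matrix.conjTranspose_smul, hA.1.eq]
    simp
  · intro x
    have h : star x ⬝ᵥ ((c : ℂ) • A) *ᵥ x = (c : ℂ) * (star x ⬝ᵥ A *ᵥ x) := by
      rw [Matrix.smul_mulVec, dotProduct_smul, smul_eq_mul]
    rw [h]
    exact mul_nonneg (by exact_mod_cast (Complex.zero_le_real).2 hc) (hA.dotProduct_mulVec_nonneg x)

/-- Sufficient condition for optimality of the SIM (Theorem 1): if
ψ_i^* Δ⁻¹ ψ_i = α I for all i and 1 − nλ_min ≤ β < 1, then the SIM with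
γ = √((1−β)/n) is a measurement with P_I = β that maximizes the probability of
correct detection among all measurements with inconclusive rate β. -/
theorem stmt_8 {n m : ℕ} {r : Fin m → ℕ}
    (φ : (i : Fin m) → Matrix (Fin n) (Fin (r i)) ℂ)
    (p : Fin m → ℝ) (hp : ∀ i, 0 < p i) (hpsum : ∑ i, p i = 1)
    (ρ : Fin m → Matrix (Fin n) (Fin n) ℂ) (hρ : ∀ i, ρ i = φ i * (φ i)ᴴ)
    (hρtr : ∀ i, (ρ i).trace = 1)
    (Δ : Matrix (Fin n) (Fin n) ℂ) (hΔ : Δ = ∑ i, (p i : ℂ) • ρ i)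
    (hΔinv : IsUnit Δ.det) (hΔH : Δ.IsHermitian)
    (lam : ℝ) (hlam : IsLeast (Set.range hΔH.eigenvalues) lam)
    (β : ℝ) (hβ1 : 1 - (n : ℝ) * lam ≤ β) (hβ2 : β < 1)
    (γ : ℝ) (hγ : γ = Real.sqrt ((1 - β) / n))
    (ψ : (i : Fin m) → Matrix (Fin n) (Fin (r i)) ℂ)
    (hψ : ∀ i, ψ i = (Real.sqrt (p i) : ℂ) • φ i)
    (μ : (i : Fin m) → Matrix (Fin n) (Fin (r i)) ℂ)
    (hμ : ∀ i, μ i = (γ : ℂ) • (Δ⁻¹ * ψ i))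
    (α : ℝ) (hα : ∀ i, (ψ i)ᴴ * Δ⁻¹ * ψ i = (α : ℂ) • 1) :
    (1 - ∑ i, μ i * (μ i)ᴴ).PosSemidef ∧
    (Δ * (1 - ∑ i, μ i * (μ i)ᴴ)).trace = (β : ℂ) ∧
    ∀ (N0 : Matrix (Fin n) (Fin n) ℂ) (N : Fin m → Matrix (Fin n) (Fin n) ℂ),
      N0.PosSemidef → (∀ i, (N i).PosSemidef) → (N0 + ∑ i, N i = 1) →
      (Δ * N0).trace = (β : ℂ) →
      ∑ i, p i * ((ρ i * N i).trace).re
        ≤ ∑ i, p i * ((ρ i * (μ i * (μ i)ᴴ)).trace).re := by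
  -- basic numeric facts
  have hn : 0 < n := by
    rcases Nat.eq_zero_or_pos n with h0 | h; · rw [h0] at hβ1; push_cast at hβ1; linarith
    exact h
  have hnR : (0:ℝ) < n := by exact_mod_cast hn
  have hβn : (0:ℝ) ≤ (1 - β) / n := div_nonneg (by linarith) hnR.le
  have hγ2 : γ^2 = (1 - β) / n := by rw [hγ, Real.sq_sqrt hβn]
  have hγn : γ^2 * n = 1 - β := by rw [hγ2]; field_simp
  -- ψψᴴ = p • ρ
  have hψψ : ∀ i, ψ i * (ψ i)ᴴ = (p i : ℂ) • ρ i := by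
    intro i
    rw [hψ, hρ, Matrix.conjTranspose_smul, Matrix.smul_mul, Matrix.mul_smul, smul_smul]
    congr 1
    rw [Complex.star_def, Complex.conj_ofReal, ← Complex.ofReal_mul,
      Real.mul_self_sqrt (hp i).le]
  have hΔsum : Δ = ∑ i, ψ i * (ψ i)ᴴ := by
    rw [hΔ]; exact Finset.sum_congr rfl fun i _ => (hψψ i).symm
  have hΔpsd : Δ.PosSemidef := by
    rw [hΔsum]
    exact myPSDsum _ _ fun i _ => Matrix.posSemidef_self_mul_conjTranspose _
  have hΔdet : Δ.det ≠ 0 := hΔinv.ne_zero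
  have hΔΔinv : Δ * Δ⁻¹ = 1 := Matrix.mul_nonsing_inv Δ hΔinv
  have hΔinvΔ : Δ⁻¹ * Δ = 1 := Matrix.nonsing_inv_mul Δ hΔinv
  have hΔinvH : (Δ⁻¹).IsHermitian := by
    unfold Matrix.IsHermitian
    rw [Matrix.conjTranspose_nonsing_inv, hΔH.eq]
  -- the SIM operator
  have hμμ : ∀ i, μ i * (μ i)ᴴ = ((γ:ℂ)^2) • (Δ⁻¹ * (ψ i * (ψ i)ᴴ) * Δ⁻¹) := by
    intro i
    rw [hμ, Matrix.conjTranspose_smul, Matrix.smul_mul, Matrix.mul_smul, smul_smul,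
      Matrix.conjTranspose_mul, hΔinvH.eq]
    rw [Complex.star_def, Complex.conj_ofReal, ← sq]
    rw [Matrix.mul_assoc, Matrix.mul_assoc, Matrix.mul_assoc]
  have hS : ∑ i, μ i * (μ i)ᴴ = ((γ:ℂ)^2) • Δ⁻¹ := by
    rw [Finset.sum_congr rfl fun i _ => hμμ i, ← Finset.smul_sum]
    congr 1
    rw [← Finset.sum_mul, ← Finset.mul_sum, ← hΔsum, hΔinvΔ, Matrix.one_mul]
  -- eigenvalue facts
  have hev_nonneg : ∀ j, 0 ≤ hΔH.eigenvalues j := fun j => hΔpsd.eigenvalues_nonneg j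
  have hprod : (∏ j, (hΔH.eigenvalues j : ℂ)) ≠ 0 := hΔH.det_eq_prod_eigenvalues ▸ hΔdet
  have hev_ne : ∀ j, (hΔH.eigenvalues j : ℂ) ≠ 0 := by
    intro j
    exact Finset.prod_ne_zero_iff.mp hprod j (Finset.mem_univ j)
  have hev_pos : ∀ j, 0 < hΔH.eigenvalues j := by
    intro j
    rcases lt_or_eq_of_le (hev_nonneg j) with h | h
    · exact h
    · exact absurd (by rw [← h]; norm_num) (hev_ne j)
  have hlam_le : ∀ j, lam ≤ hΔH.eigenvalues j := fun j => hlam.2 (Set.mem_range_self j)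
  have hγlam : γ^2 ≤ lam := by rw [hγ2, div_le_iff₀ hnR]; linarith
  set U : Matrix (Fin n) (Fin n) ℂ := (hΔH.eigenvectorUnitary : Matrix (Fin n) (Fin n) ℂ) with hU_def
  have hU1 : U * star U = 1 := Matrix.mem_unitaryGroup_iff.mp hΔH.eigenvectorUnitary.2
  have hU2 : star U * U = 1 := Matrix.mem_unitaryGroup_iff'.mp hΔH.eigenvectorUnitary.2
  set d : Fin n → ℂ := fun j => ((hΔH.eigenvalues j : ℝ) : ℂ) with hd_def
  have hspec : Δ = U * Matrix.diagonal d * star U := hΔH.spectral_theorem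
  have hΔinv_eq : Δ⁻¹ = U * Matrix.diagonal (fun j => (d j)⁻¹) * star U := by
    apply Matrix.inv_eq_right_inv
    rw [hspec]
    simp only [Matrix.mul_assoc]
    rw [← Matrix.mul_assoc (star U) U, hU2, Matrix.one_mul,
      ← Matrix.mul_assoc (Matrix.diagonal d), Matrix.diagonal_mul_diagonal]
    have : (fun j => d j * (d j)⁻¹) = fun _ => (1:ℂ) := by
      funext j; exact mul_inv_cancel₀ (hev_ne j)
    rw [this, Matrix.diagonal_one, Matrix.one_mul, hU1]
  have hdiag_eq : Matrix.diagonal (fun j => ((1 - γ^2 / hΔH.eigenvalues j : ℝ) : ℂ))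
      = 1 - ((γ:ℂ)^2) • Matrix.diagonal (fun j => (d j)⁻¹) := by
    have hfun : (fun j => ((1 - γ^2 / hΔH.eigenvalues j : ℝ) : ℂ))
        = (fun j => 1 - (γ:ℂ)^2 * (d j)⁻¹) := by
      funext j
      push_cast
      rw [div_eq_mul_inv]
    rw [hfun, ← Matrix.diagonal_one, ← Matrix.diagonal_smul, Matrix.diagonal_sub]
    simp only [Pi.smul_apply, smul_eq_mul]
  have key : U * Matrix.diagonal (fun j => ((1 - γ^2 / hΔH.eigenvalues j : ℝ) : ℂ)) * star U
      = 1 - ((γ:ℂ)^2) • Δ⁻¹ := by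
    rw [hdiag_eq, Matrix.mul_sub, Matrix.sub_mul, Matrix.mul_one, hU1, Matrix.mul_smul,
      Matrix.smul_mul, ← hΔinv_eq]
  have part1 : (1 - ∑ i, μ i * (μ i)ᴴ).PosSemidef := by
    rw [hS, ← key, Matrix.star_eq_conjTranspose U]
    apply Matrix.PosSemidef.mul_mul_conjTranspose_same
    apply Matrix.posSemidef_diagonal_iff.mpr
    intro j
    apply Complex.zero_le_real.2
    have h1 : γ^2 / hΔH.eigenvalues j ≤ 1 := by
      rw [div_le_one (hev_pos j)]
      linarith [hlam_le j]
    linarith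
  -- Part 2: trace
  have hΔtr : Δ.trace = 1 := by
    rw [hΔ, Matrix.trace_sum]
    simp only [Matrix.trace_smul, hρtr, smul_eq_mul, mul_one]
    rw [← Complex.ofReal_sum, hpsum, Complex.ofReal_one]
  have part2 : (Δ * (1 - ∑ i, μ i * (μ i)ᴴ)).trace = (β : ℂ) := by
    rw [hS, Matrix.mul_sub, Matrix.mul_one, Matrix.mul_smul, hΔΔinv, Matrix.trace_sub,
      Matrix.trace_smul, Matrix.trace_one, hΔtr, Fintype.card_fin, smul_eq_mul]
    have hc := congrArg Complex.ofReal hγn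
    push_cast at hc ⊢
    linear_combination -hc
  refine ⟨part1, part2, ?_⟩
  intro N0 N hN0 hN hNsum hNtr
  -- square root of Δ
  set R : Matrix (Fin n) (Fin n) ℂ := (open scoped MatrixOrder Matrix.Norms.L2Operator in
    CFC.sqrt Δ) with hR_def
  have hRpsd : R.PosSemidef := (open scoped MatrixOrder Matrix.Norms.L2Operator in
    (CFC.sqrt_nonneg Δ).posSemidef)
  have hRH : R.IsHermitian := hRpsd.1
  have hRR : R * R = Δ := (open scoped MatrixOrder Matrix.Norms.L2Operator in
    CFC.sqrt_mul_sqrt_self Δ hΔpsd.nonneg)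
  have hRdet : IsUnit R.det := by
    have h1 : Δ.det = R.det * R.det := by rw [← hRR, Matrix.det_mul]
    refine isUnit_iff_ne_zero.mpr fun h => ?_
    rw [h1, h, mul_zero] at hΔdet
    exact hΔdet rfl
  have hRRinv : R * R⁻¹ = 1 := Matrix.mul_nonsing_inv R hRdet
  have hRinvH : (R⁻¹).IsHermitian := by
    unfold Matrix.IsHermitian
    rw [Matrix.conjTranspose_nonsing_inv, hRH.eq]
  have hΔinvRR : Δ⁻¹ = R⁻¹ * R⁻¹ := by rw [← hRR, Matrix.mul_inv_rev]
  set v : (i : Fin m) → Matrix (Fin n) (Fin (r i)) ℂ := fun i => R⁻¹ * ψ i with hv_def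
  have hψRv : ∀ i, ψ i = R * v i := by
    intro i
    rw [hv_def]
    rw [← Matrix.mul_assoc, hRRinv, Matrix.one_mul]
  have hvv : ∀ i, (v i)ᴴ * v i = (α : ℂ) • 1 := by
    intro i
    show (R⁻¹ * ψ i)ᴴ * (R⁻¹ * ψ i) = (α : ℂ) • 1
    rw [Matrix.conjTranspose_mul, hRinvH.eq, ← Matrix.mul_assoc,
      Matrix.mul_assoc ((ψ i)ᴴ) R⁻¹ R⁻¹, ← hΔinvRR]
    exact hα i
  -- α facts
  have htr_i : ∀ i, ((ψ i)ᴴ * Δ⁻¹ * ψ i).trace = (α:ℂ) * (r i) := by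
    intro i
    rw [hα i, Matrix.trace_smul, Matrix.trace_one]
    simp [Fintype.card_fin]
  have hsum_tr : ∑ i, ((ψ i)ᴴ * Δ⁻¹ * ψ i).trace = (n : ℂ) := by
    have h1 : ∀ i, ((ψ i)ᴴ * Δ⁻¹ * ψ i).trace = ((ψ i * (ψ i)ᴴ) * Δ⁻¹).trace := by
      intro i
      rw [Matrix.trace_mul_comm ((ψ i)ᴴ * Δ⁻¹) (ψ i), ← Matrix.mul_assoc]
    rw [Finset.sum_congr rfl fun i _ => h1 i, ← Matrix.trace_sum, ← Finset.sum_mul,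
      ← hΔsum, hΔΔinv, Matrix.trace_one]
    simp [Fintype.card_fin]
  have hαn : (α:ℂ) * (∑ i, (r i : ℂ)) = (n : ℂ) := by
    rw [← hsum_tr, Finset.sum_congr rfl fun i _ => htr_i i, Finset.mul_sum]
  have hαnR : α * (∑ i, (r i : ℝ)) = n := by exact_mod_cast hαn
  have hαpos : 0 < α := by
    by_contra h
    push_neg at h
    have hs : (0:ℝ) ≤ ∑ i, (r i : ℝ) := Finset.sum_nonneg fun i _ => Nat.cast_nonneg _
    nlinarith
  -- the operators α•1 - v vᴴ are PSD
  have hBpsd : ∀ i, (((α:ℂ)) • 1 - v i * (v i)ᴴ).PosSemidef := by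
    intro i
    set Q : Matrix (Fin n) (Fin n) ℂ := v i * (v i)ᴴ with hQdef
    have hQH : Qᴴ = Q := (Matrix.posSemidef_self_mul_conjTranspose (v i)).1
    have hQ2 : Q * Q = (α:ℂ) • Q := by
      rw [hQdef, Matrix.mul_assoc, ← Matrix.mul_assoc ((v i)ᴴ) (v i) ((v i)ᴴ), hvv,
        Matrix.smul_mul, Matrix.one_mul, Matrix.mul_smul]
    set B : Matrix (Fin n) (Fin n) ℂ := (α:ℂ) • 1 - Q with hBdef
    have hBH : Bᴴ = B := by
      rw [hBdef, Matrix.conjTranspose_sub, Matrix.conjTranspose_smul,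
        Matrix.conjTranspose_one, hQH, Complex.star_def, Complex.conj_ofReal]
    have hBB : B * B = (α:ℂ) • B := by
      rw [hBdef]
      simp only [Matrix.sub_mul, Matrix.mul_sub, Matrix.smul_mul, Matrix.mul_smul,
        Matrix.one_mul, Matrix.mul_one, hQ2, smul_smul, smul_sub]
      module
    have hPSD : ((α:ℂ) • B).PosSemidef := by
      have h1 : (α:ℂ) • B = Bᴴ * B := by rw [hBH, hBB]
      rw [h1]
      exact Matrix.posSemidef_conjTranspose_mul_self B
    have hB1 : B = ((α⁻¹ : ℝ) : ℂ) • ((α:ℂ) • B) := by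
      rw [smul_smul, ← Complex.ofReal_mul, inv_mul_cancel₀ hαpos.ne', Complex.ofReal_one,
        one_smul]
    rw [hB1]
    exact mySmulPSD hPSD (inv_nonneg.mpr hαpos.le)
  -- conjugated measurement operators
  have hMpsd : ∀ i, (R * (N i * R)).PosSemidef := by
    intro i
    have h1 := (hN i).mul_mul_conjTranspose_same R
    rw [hRH.eq] at h1
    rwa [← Matrix.mul_assoc]
  -- per-state trace identity
  have htrQM : ∀ i, (p i : ℂ) * (ρ i * N i).trace
      = ((v i * (v i)ᴴ) * (R * (N i * R))).trace := by
    intro i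
    have e0 : (p i : ℂ) * (ρ i * N i).trace = ((ψ i * (ψ i)ᴴ) * N i).trace := by
      rw [hψψ, Matrix.smul_mul, Matrix.trace_smul, smul_eq_mul]
    rw [e0, hψRv i, Matrix.conjTranspose_mul, hRH.eq]
    have e1 : (R * v i * ((v i)ᴴ * R)) * N i = R * ((v i * ((v i)ᴴ * (R * N i)))) := by
      simp only [Matrix.mul_assoc]
    rw [e1, Matrix.trace_mul_comm R (v i * ((v i)ᴴ * (R * N i)))]
    have e2 : v i * ((v i)ᴴ * (R * N i)) * R = (v i * (v i)ᴴ) * (R * (N i * R)) := by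
      simp only [Matrix.mul_assoc]
    rw [e2]
  -- per-state inequality in ℂ
  have hineq : ∀ i, (p i : ℂ) * (ρ i * N i).trace ≤ (α:ℂ) * (R * (N i * R)).trace := by
    intro i
    have h0 : 0 ≤ ((((α:ℂ)) • 1 - v i * (v i)ᴴ) * (R * (N i * R))).trace :=
      myTraceMulNonneg (hBpsd i) (hMpsd i)
    rw [Matrix.sub_mul, Matrix.smul_mul, Matrix.one_mul, Matrix.trace_sub,
      Matrix.trace_smul, smul_eq_mul, sub_nonneg] at h0
    rw [htrQM i]
    exact h0
  -- sum of conjugated operators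
  have hNsum' : ∑ i, N i = 1 - N0 := by
    rw [← hNsum]
    abel
  have hsumM : ∑ i, (R * (N i * R)).trace = ((1 - β : ℝ) : ℂ) := by
    rw [← Matrix.trace_sum]
    have e1 : ∑ i, R * (N i * R) = R * ((∑ i, N i) * R) := by
      rw [Finset.sum_mul, Finset.mul_sum]
    rw [e1, hNsum', Matrix.sub_mul, Matrix.mul_sub, Matrix.one_mul, hRR, Matrix.trace_sub,
      hΔtr]
    have e2 : (R * (N0 * R)).trace = (Δ * N0).trace := by
      rw [Matrix.trace_mul_comm R (N0 * R), Matrix.mul_assoc, Matrix.trace_mul_comm N0 (R * R),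
        hRR]
    rw [e2, hNtr]
    push_cast
    ring
  -- upper bound in ℂ
  have hbound : ∑ i, (p i : ℂ) * (ρ i * N i).trace ≤ (α:ℂ) * ((1 - β : ℝ) : ℂ) := by
    calc ∑ i, (p i : ℂ) * (ρ i * N i).trace
        ≤ ∑ i, (α:ℂ) * (R * (N i * R)).trace := Finset.sum_le_sum fun i _ => hineq i
      _ = (α:ℂ) * ((1 - β : ℝ) : ℂ) := by rw [← Finset.mul_sum, hsumM]
  -- value of P_D for the SIM
  have hRHSi : ∀ i, (p i : ℂ) * (ρ i * (μ i * (μ i)ᴴ)).trace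
      = (γ:ℂ)^2 * ((α:ℂ) * (α:ℂ) * (r i : ℂ)) := by
    intro i
    have e0 : (p i:ℂ) * (ρ i * (μ i * (μ i)ᴴ)).trace
        = ((ψ i * (ψ i)ᴴ) * (μ i * (μ i)ᴴ)).trace := by
      rw [hψψ, Matrix.smul_mul, Matrix.trace_smul, smul_eq_mul]
    rw [e0, hμμ i, Matrix.mul_smul, Matrix.trace_smul, smul_eq_mul]
    congr 1
    have e1 : (ψ i * (ψ i)ᴴ) * (Δ⁻¹ * (ψ i * (ψ i)ᴴ) * Δ⁻¹)
        = ψ i * ((ψ i)ᴴ * (Δ⁻¹ * (ψ i * ((ψ i)ᴴ * Δ⁻¹)))) := by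
      simp only [Matrix.mul_assoc]
    rw [e1, Matrix.trace_mul_comm (ψ i)]
    have e2 : (ψ i)ᴴ * (Δ⁻¹ * (ψ i * ((ψ i)ᴴ * Δ⁻¹))) * ψ i
        = ((ψ i)ᴴ * Δ⁻¹ * ψ i) * ((ψ i)ᴴ * Δ⁻¹ * ψ i) := by
      simp only [Matrix.mul_assoc]
    rw [e2, hα i]
    simp [Matrix.smul_mul, Matrix.one_mul, Matrix.trace_smul, Matrix.trace_one,
      Fintype.card_fin, smul_eq_mul, smul_smul]
  have hRHSsum : ∑ i, (p i:ℂ) * (ρ i * (μ i * (μ i)ᴴ)).trace = (α:ℂ) * ((1-β:ℝ):ℂ) := by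
    rw [Finset.sum_congr rfl fun i _ => hRHSi i, ← Finset.mul_sum]
    have e : ∑ i, ((α:ℂ) * (α:ℂ) * (r i:ℂ)) = (α:ℂ) * ((α:ℂ) * ∑ i, (r i:ℂ)) := by
      rw [← Finset.mul_sum, mul_assoc]
    rw [e, hαn]
    have hc := congrArg Complex.ofReal hγn
    push_cast at hc ⊢
    linear_combination (α:ℂ) * hc
  -- conclusion
  have hL : ∑ i, p i * ((ρ i * N i).trace).re = (∑ i, (p i:ℂ) * (ρ i * N i).trace).re := by
    rw [Complex.re_sum]
    exact Finset.sum_congr rfl fun i _ => by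
      simp [Complex.mul_re, Complex.ofReal_re, Complex.ofReal_im]
  have hR2 : ∑ i, p i * ((ρ i * (μ i * (μ i)ᴴ)).trace).re
      = (∑ i, (p i:ℂ) * (ρ i * (μ i * (μ i)ᴴ)).trace).re := by
    rw [Complex.re_sum]
    exact Finset.sum_congr rfl fun i _ => by
      simp [Complex.mul_re, Complex.ofReal_re, Complex.ofReal_im]
  rw [hL, hR2, hRHSsum]
  exact (Complex.le_def.mp hbound).1
end

section
/- Optimality of the SIM for CGU state sets (Theorem 3, part 3): Let {ρ_{ik} = U_i ρ_k U_i^*} be a CGU state set with generators ρ_k = φ_kφ_k^*, let Φ be the matrix with block columns φ_{ik} = U_iφ_k (so ΦΦ^* = lrΔ, assumed invertible), and let λ_min be the smallest eigenvalue of Δ. If there is a constant α such that φ_k^*(ΦΦ^*)^{-1}φ_k = α I_s for every 1 ≤ k ≤ r, then for every β with 1 − nλ_min ≤ β < 1, the SIM with γ = √((1−β)/n) is a measurement with P_I = β and maximizes P_D among all measurements with P_I = β. -/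
open Matrix BigOperators ComplexOrder

lemma psd_smul_real {m : Type*} [Fintype m] {M : Matrix m m ℂ}
    (hM : M.PosSemidef) {c : ℝ} (hc : 0 ≤ c) : ((c : ℂ) • M).PosSemidef := by
  refine PosSemidef.of_dotProduct_mulVec_nonneg ?_ fun x => ?_
  · have : star (c : ℂ) = (c : ℂ) := by simp [Complex.star_def, Complex.conj_ofReal]
    unfold Matrix.IsHermitian
    rw [conjTranspose_smul, this, hM.1.eq]
  · rw [smul_mulVec, dotProduct_smul, smul_eq_mul]
    exact mul_nonneg (Complex.zero_le_real.mpr hc) (hM.dotProduct_mulVec_nonneg x)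

lemma psd_trace_nonneg {m : Type*} [Fintype m] [DecidableEq m] {A : Matrix m m ℂ}
    (hA : A.PosSemidef) : 0 ≤ A.trace := by
  rw [Matrix.trace]
  refine Finset.sum_nonneg fun i _ => ?_
  have h := hA.dotProduct_mulVec_nonneg (Pi.single i 1)
  simpa [dotProduct, Matrix.mulVec, Pi.single_apply, Finset.sum_ite_eq, Matrix.diag,
    mul_ite, ite_mul] using h

lemma trace_mul_psd_nonneg {m : Type*} [Fintype m] [DecidableEq m] {A B : Matrix m m ℂ}
    (hA : A.PosSemidef) (hB : B.PosSemidef) : 0 ≤ (A * B).trace := by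
  obtain ⟨C, rfl⟩ : ∃ C : Matrix m m ℂ, B = Cᴴ * C := by
    open scoped MatrixOrder in
    obtain ⟨C, hC⟩ := CStarAlgebra.nonneg_iff_eq_star_mul_self.mp hB.nonneg
    exact ⟨C, hC⟩
  have h : (A * (Cᴴ * C)).trace = (C * A * Cᴴ).trace := by
    rw [← Matrix.mul_assoc, trace_mul_comm, ← Matrix.mul_assoc]
  rw [h]
  exact psd_trace_nonneg (hA.mul_mul_conjTranspose_same C)

lemma psd_sum {ι m : Type*} [Fintype m] (t : Finset ι) (f : ι → Matrix m m ℂ)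
    (h : ∀ i ∈ t, (f i).PosSemidef) : (∑ i ∈ t, f i).PosSemidef :=
  Finset.sum_induction f _ (fun _ _ ha hb => ha.add hb) Matrix.PosSemidef.zero h

/-- Optimality of the SIM for CGU state sets (Theorem 3, part 3): if the
generators satisfy φ_k^*(ΦΦ^*)⁻¹φ_k = αI (with ΦΦ^* = lrΔ) for all k, then for
every β with 1 − nλ_min ≤ β < 1 the SIM with γ = √((1−β)/n) is a measurement
with P_I = β that maximizes P_D among all measurements with P_I = β. -/
theorem stmt_17 {n l r s : ℕ} (hl : 0 < l)
    (U : Fin l → Matrix (Fin n) (Fin n) ℂ)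
    (hUunit : ∀ i, U i * (U i)ᴴ = 1)
    (hUinj : Function.Injective U)
    (hU1 : U ⟨0, hl⟩ = 1)
    (hUmul : ∀ i j, ∃ k, U i * U j = U k)
    (hUinv : ∀ i, ∃ j, (U i)ᴴ = U j)
    (φ : Fin r → Matrix (Fin n) (Fin s) ℂ)
    (hφtr : ∀ k, (φ k * (φ k)ᴴ).trace = 1)
    (ρ : Fin l → Fin r → Matrix (Fin n) (Fin n) ℂ)
    (hρ : ∀ i k, ρ i k = U i * (φ k * (φ k)ᴴ) * (U i)ᴴ)
    (Δ : Matrix (Fin n) (Fin n) ℂ)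
    (hΔ : Δ = (1 / ((l : ℂ) * r)) • ∑ i, ∑ k, ρ i k)
    (hΔinv : IsUnit Δ.det) (hΔH : Δ.IsHermitian)
    (lam : ℝ) (hlam : IsLeast (Set.range hΔH.eigenvalues) lam)
    (α : ℝ) (hα : ∀ k, (φ k)ᴴ * (((l : ℂ) * r) • Δ)⁻¹ * φ k = (α : ℂ) • 1)
    (β : ℝ) (hβ1 : 1 - (n : ℝ) * lam ≤ β) (hβ2 : β < 1)
    (γ : ℝ) (hγ : γ = Real.sqrt ((1 - β) / n))
    (ψ : Fin l → Fin r → Matrix (Fin n) (Fin s) ℂ)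
    (hψ : ∀ i k, ψ i k = (Real.sqrt (1 / (l * r)) : ℂ) • (U i * φ k))
    (μ : Fin l → Fin r → Matrix (Fin n) (Fin s) ℂ)
    (hμ : ∀ i k, μ i k = (γ : ℂ) • (Δ⁻¹ * ψ i k)) :
    (1 - ∑ i, ∑ k, μ i k * (μ i k)ᴴ).PosSemidef ∧
    (Δ * (1 - ∑ i, ∑ k, μ i k * (μ i k)ᴴ)).trace = (β : ℂ) ∧
    ∀ (N0 : Matrix (Fin n) (Fin n) ℂ)
      (N : Fin l → Fin r → Matrix (Fin n) (Fin n) ℂ),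
      N0.PosSemidef → (∀ i k, (N i k).PosSemidef) →
      (N0 + ∑ i, ∑ k, N i k = 1) →
      (Δ * N0).trace = (β : ℂ) →
      (1 / (l * r) : ℝ) * ∑ i, ∑ k, ((ρ i k * N i k).trace).re
        ≤ (1 / (l * r) : ℝ) * ∑ i, ∑ k, ((ρ i k * (μ i k * (μ i k)ᴴ)).trace).re := by
  classical
  obtain ⟨i0, hi0⟩ := hlam.1
  have hn : 0 < n := i0.pos
  have hnR : (0:ℝ) < n := by exact_mod_cast hn
  have hr : 0 < r := by
    rcases Nat.eq_zero_or_pos r with hr0 | hr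
    · exfalso
      subst hr0
      have hΔ0 : Δ = 0 := by simp [hΔ]
      haveI : Nonempty (Fin n) := ⟨i0⟩
      rw [hΔ0, Matrix.det_zero] at hΔinv
      simpa using hΔinv
    · exact hr
  have hs : 0 < s := by
    rcases Nat.eq_zero_or_pos s with hs0 | hs
    · exfalso
      have h := hφtr ⟨0, hr⟩
      subst hs0
      have hzero : φ ⟨0, hr⟩ * (φ ⟨0, hr⟩)ᴴ = 0 := by
        ext i j; simp [Matrix.mul_apply]
      rw [hzero, trace_zero] at h
      exact zero_ne_one h
    · exact hs
  set c : ℂ := (l : ℂ) * r with hcdef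
  have hc : c ≠ 0 := by
    simp only [hcdef]
    exact mul_ne_zero (Nat.cast_ne_zero.mpr hl.ne') (Nat.cast_ne_zero.mpr hr.ne')
  have hΔsum : ∑ i, ∑ k, ρ i k = c • Δ := by
    rw [hΔ, smul_smul, mul_one_div, div_self hc, one_smul]
  have hUl : ∀ i, (U i)ᴴ * U i = 1 := fun i => mul_eq_one_comm.mp (hUunit i)
  have hΔmulinv : Δ * Δ⁻¹ = 1 := Matrix.mul_nonsing_inv _ hΔinv
  have hΔinvmul : Δ⁻¹ * Δ = 1 := Matrix.nonsing_inv_mul _ hΔinv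
  have hΔiH : Δ⁻¹.IsHermitian := by
    unfold Matrix.IsHermitian
    rw [Matrix.conjTranspose_nonsing_inv, hΔH.eq]
  have hρ' : ∀ i k, ρ i k = (U i * φ k) * (U i * φ k)ᴴ := by
    intro i k
    rw [hρ, conjTranspose_mul]
    simp only [Matrix.mul_assoc]
  have hρpsd : ∀ i k, (ρ i k).PosSemidef := by
    intro i k; rw [hρ']; exact posSemidef_self_mul_conjTranspose _
  have hΔpsd : Δ.PosSemidef := by
    have h1c : (1 / ((l:ℂ)*r)) = ((1/((l:ℝ)*(r:ℝ)) : ℝ) : ℂ) := by push_cast; ring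
    rw [hΔ, h1c]
    exact psd_smul_real
      (psd_sum _ _ fun i _ => psd_sum _ _ fun k _ => hρpsd i k)
      (by positivity)
  -- group invariance
  have hUΔ : ∀ j, U j * Δ * (U j)ᴴ = Δ := by
    intro j
    choose σ hσ using fun i => hUmul j i
    have hσbij : Function.Bijective σ := by
      refine Finite.injective_iff_bijective.mp ?_
      intro x y hxy
      apply hUinj
      have h1 : U j * U x = U j * U y := by rw [hσ x, hσ y, hxy]
      calc U x = ((U j)ᴴ * U j) * U x := by rw [hUl, Matrix.one_mul]
        _ = (U j)ᴴ * (U j * U y) := by rw [Matrix.mul_assoc, h1]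
        _ = ((U j)ᴴ * U j) * U y := by rw [Matrix.mul_assoc]
        _ = U y := by rw [hUl, Matrix.one_mul]
    have hconj : ∀ i k, U j * ρ i k * (U j)ᴴ = ρ (σ i) k := by
      intro i k
      rw [hρ, hρ, ← hσ i, conjTranspose_mul]
      simp only [Matrix.mul_assoc]
    have hsum : U j * (∑ i, ∑ k, ρ i k) * (U j)ᴴ = ∑ i, ∑ k, ρ i k := by
      rw [Finset.mul_sum, Finset.sum_mul]
      calc ∑ i, (U j * (∑ k, ρ i k)) * (U j)ᴴ
          = ∑ i, ∑ k, U j * ρ i k * (U j)ᴴ := by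
            refine Finset.sum_congr rfl fun i _ => ?_
            rw [Finset.mul_sum, Finset.sum_mul]
        _ = ∑ i, ∑ k, ρ (σ i) k := by
            refine Finset.sum_congr rfl fun i _ => Finset.sum_congr rfl fun k _ => hconj i k
        _ = ∑ i, ∑ k, ρ i k := hσbij.sum_comp fun i => ∑ k, ρ i k
    rw [hΔ, Matrix.mul_smul, Matrix.smul_mul, hsum]
  have hcomm : ∀ j, U j * Δ = Δ * U j := by
    intro j
    have h := congrArg (· * U j) (hUΔ j)
    simpa only [Matrix.mul_assoc, hUl, Matrix.mul_one] using h
  have hcommI : ∀ j, Δ⁻¹ * U j = U j * Δ⁻¹ := by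
    intro j
    calc Δ⁻¹ * U j = Δ⁻¹ * U j * (Δ * Δ⁻¹) := by rw [hΔmulinv, Matrix.mul_one]
      _ = Δ⁻¹ * (U j * Δ) * Δ⁻¹ := by simp only [Matrix.mul_assoc]
      _ = Δ⁻¹ * (Δ * U j) * Δ⁻¹ := by rw [hcomm]
      _ = (Δ⁻¹ * Δ) * (U j * Δ⁻¹) := by simp only [Matrix.mul_assoc]
      _ = U j * Δ⁻¹ := by rw [hΔinvmul, Matrix.one_mul]
  have hcommI' : ∀ j, (U j)ᴴ * Δ⁻¹ = Δ⁻¹ * (U j)ᴴ := by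
    intro j
    calc (U j)ᴴ * Δ⁻¹ = (U j)ᴴ * Δ⁻¹ * (U j * (U j)ᴴ) := by rw [hUunit, Matrix.mul_one]
      _ = (U j)ᴴ * (Δ⁻¹ * U j) * (U j)ᴴ := by simp only [Matrix.mul_assoc]
      _ = (U j)ᴴ * (U j * Δ⁻¹) * (U j)ᴴ := by rw [hcommI]
      _ = ((U j)ᴴ * U j) * (Δ⁻¹ * (U j)ᴴ) := by simp only [Matrix.mul_assoc]
      _ = Δ⁻¹ * (U j)ᴴ := by rw [hUl, Matrix.one_mul]
  -- eigenvalues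
  have hevpos : ∀ i, 0 < hΔH.eigenvalues i := by
    intro i
    rcases (hΔpsd.eigenvalues_nonneg i).lt_or_eq with h | h
    · exact h
    · exfalso
      have hdet := hΔH.det_eq_prod_eigenvalues
      rw [Finset.prod_eq_zero (Finset.mem_univ i) (by rw [← h]; norm_num)] at hdet
      rw [hdet] at hΔinv
      simpa using hΔinv
  have hlampos : 0 < lam := hi0 ▸ hevpos i0
  set g : ℝ := (1 - β) / n with hgdef
  have hgnn : 0 ≤ g := div_nonneg (by linarith) hnR.le
  have hγ2 : (γ:ℝ) ^ 2 = g := by rw [hγ]; exact Real.sq_sqrt (div_nonneg (by linarith) hnR.le)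
  have hglam : g ≤ lam := by
    rw [hgdef, div_le_iff₀ hnR]
    nlinarith
  have hgev : ∀ i, g ≤ hΔH.eigenvalues i := fun i => hglam.trans (hlam.2 ⟨i, rfl⟩)
  -- spectral decomposition
  set V : Matrix (Fin n) (Fin n) ℂ := (hΔH.eigenvectorUnitary : Matrix (Fin n) (Fin n) ℂ)
    with hVdef
  have hVV : V * Vᴴ = 1 := by
    rw [← Matrix.star_eq_conjTranspose]
    exact Matrix.mem_unitaryGroup_iff.mp hΔH.eigenvectorUnitary.2
  have hVsV : Vᴴ * V = 1 := by
    rw [← Matrix.star_eq_conjTranspose]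
    exact Matrix.mem_unitaryGroup_iff'.mp hΔH.eigenvectorUnitary.2
  set D : Matrix (Fin n) (Fin n) ℂ := Matrix.diagonal (RCLike.ofReal ∘ hΔH.eigenvalues)
    with hDdef
  have hspec : Δ = V * D * Vᴴ := by
    rw [← Matrix.star_eq_conjTranspose]
    exact hΔH.spectral_theorem
  set F : Matrix (Fin n) (Fin n) ℂ :=
    Matrix.diagonal (RCLike.ofReal ∘ fun i => (hΔH.eigenvalues i)⁻¹) with hFdef
  have hDF : D * F = 1 := by
    rw [hDdef, hFdef, Matrix.diagonal_mul_diagonal]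
    ext i j
    rcases eq_or_ne i j with rfl | hij
    · simp only [Matrix.diagonal_apply_eq, Matrix.one_apply_eq, Pi.mul_apply,
        Function.comp_apply, ← RCLike.ofReal_mul, mul_inv_cancel₀ (hevpos i).ne']
      simp
    · simp [Matrix.diagonal_apply_ne _ hij, Matrix.one_apply_ne hij]
  have hΔinv_eq : Δ⁻¹ = V * F * Vᴴ := by
    apply Matrix.inv_eq_right_inv
    calc Δ * (V * F * Vᴴ) = V * D * (Vᴴ * V) * F * Vᴴ := by
          rw [hspec]; simp only [Matrix.mul_assoc]
      _ = V * (D * F) * Vᴴ := by rw [hVsV, Matrix.mul_one]; simp only [Matrix.mul_assoc]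
      _ = 1 := by rw [hDF, Matrix.mul_one, hVV]
  -- the SIM sum
  have hψψ : ∀ i k, ψ i k * (ψ i k)ᴴ = (1/c) • ρ i k := by
    intro i k
    rw [hψ, conjTranspose_smul, Matrix.smul_mul, Matrix.mul_smul, smul_smul]
    have h1 : star ((Real.sqrt (1 / (l * r)) : ℝ) : ℂ) = ((Real.sqrt (1 / (l * r)) : ℝ) : ℂ) := by
      simp [Complex.star_def, Complex.conj_ofReal]
    rw [h1, ← Complex.ofReal_mul,
      Real.mul_self_sqrt (by positivity : (0:ℝ) ≤ 1 / ((l:ℝ) * (r:ℝ))), hρ' i k]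
    rw [← hρ' i k]
    congr 1
    simp only [hcdef]
    push_cast
    ring
  have hψsum : ∑ i, ∑ k, ψ i k * (ψ i k)ᴴ = Δ := by
    calc ∑ i, ∑ k, ψ i k * (ψ i k)ᴴ = ∑ i, ∑ k, (1/c) • ρ i k := by
          exact Finset.sum_congr rfl fun i _ => Finset.sum_congr rfl fun k _ => hψψ i k
      _ = (1/c) • ∑ i, ∑ k, ρ i k := by
          rw [Finset.smul_sum]
          exact Finset.sum_congr rfl fun i _ => (Finset.smul_sum).symm
      _ = Δ := by rw [hΔsum, smul_smul, one_div, inv_mul_cancel₀ hc, one_smul]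
  have hγC : star ((γ:ℝ) : ℂ) = ((γ:ℝ) : ℂ) := by simp [Complex.star_def, Complex.conj_ofReal]
  have hμμ : ∀ i k, μ i k * (μ i k)ᴴ = ((g:ℝ):ℂ) • (Δ⁻¹ * (ψ i k * (ψ i k)ᴴ) * Δ⁻¹) := by
    intro i k
    rw [hμ, conjTranspose_smul, conjTranspose_mul, hΔiH.eq, hγC, Matrix.smul_mul,
      Matrix.mul_smul, smul_smul, ← Complex.ofReal_mul, ← pow_two, hγ2]
    congr 1
    simp only [Matrix.mul_assoc]
  have hSig : ∑ i, ∑ k, μ i k * (μ i k)ᴴ = ((g:ℝ):ℂ) • Δ⁻¹ := by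
    calc ∑ i, ∑ k, μ i k * (μ i k)ᴴ
        = ((g:ℝ):ℂ) • (Δ⁻¹ * (∑ i, ∑ k, ψ i k * (ψ i k)ᴴ) * Δ⁻¹) := by
          rw [Finset.mul_sum, Finset.sum_mul, Finset.smul_sum]
          refine Finset.sum_congr rfl fun i _ => ?_
          rw [Finset.mul_sum, Finset.sum_mul, Finset.smul_sum]
          exact Finset.sum_congr rfl fun k _ => hμμ i k
      _ = ((g:ℝ):ℂ) • Δ⁻¹ := by rw [hψsum, hΔinvmul, Matrix.one_mul]
  -- Part 1
  have part1 : (1 - ∑ i, ∑ k, μ i k * (μ i k)ᴴ).PosSemidef := by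
    rw [hSig]
    set G : Matrix (Fin n) (Fin n) ℂ :=
      Matrix.diagonal (RCLike.ofReal ∘ fun i => 1 - g * (hΔH.eigenvalues i)⁻¹) with hGdef
    have hGF : G = 1 - ((g:ℝ):ℂ) • F := by
      rw [hGdef, hFdef]
      ext i j
      rcases eq_or_ne i j with rfl | hij
      · simp [Matrix.diagonal_apply_eq, Matrix.one_apply_eq]
      · simp [Matrix.diagonal_apply_ne _ hij, Matrix.one_apply_ne hij]
    have hG : (1 : Matrix (Fin n) (Fin n) ℂ) - ((g:ℝ):ℂ) • Δ⁻¹ = V * G * Vᴴ := by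
      rw [hGF, Matrix.mul_sub, Matrix.sub_mul, Matrix.mul_smul, Matrix.smul_mul,
        Matrix.mul_one, hVV, hΔinv_eq]
    rw [hG]
    refine Matrix.PosSemidef.mul_mul_conjTranspose_same ?_ V
    rw [hGdef]
    refine Matrix.posSemidef_diagonal_iff.mpr fun i => ?_
    rw [Function.comp_apply]
    refine RCLike.ofReal_nonneg.mpr ?_
    have h1 : g * (hΔH.eigenvalues i)⁻¹ ≤ 1 := by
      rw [← div_eq_mul_inv, div_le_one (hevpos i)]
      exact hgev i
    linarith
  -- trace of Δ
  have hTrρ : ∀ i k, (ρ i k).trace = 1 := by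
    intro i k
    rw [hρ' i k, trace_mul_comm, conjTranspose_mul, Matrix.mul_assoc, ← Matrix.mul_assoc ((U i)ᴴ),
      hUl, Matrix.one_mul, trace_mul_comm]
    exact hφtr k
  have hTrΔ : Δ.trace = 1 := by
    have h1 : (∑ i, ∑ k, ρ i k).trace = c := by
      rw [trace_sum]
      calc ∑ i, (∑ k, ρ i k).trace = ∑ i : Fin l, ∑ k : Fin r, (ρ i k).trace := by
            exact Finset.sum_congr rfl fun i _ => by rw [trace_sum]
        _ = ∑ i : Fin l, ∑ k : Fin r, (1:ℂ) := by
            exact Finset.sum_congr rfl fun i _ => Finset.sum_congr rfl fun k _ => hTrρ i k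
        _ = c := by simp [hcdef]
    have h2 := congrArg Matrix.trace hΔsum
    rw [h1, trace_smul, smul_eq_mul] at h2
    exact mul_left_cancel₀ hc (by rw [mul_one, ← h2])
  have hgnC : ((g:ℝ):ℂ) * (n:ℂ) = 1 - (β:ℂ) := by
    have hgn : (g:ℝ) * (n:ℝ) = 1 - β := by
      rw [hgdef, div_mul_cancel₀ _ hnR.ne']
    calc ((g:ℝ):ℂ) * (n:ℂ) = (((g * n : ℝ)):ℂ) := by push_cast; ring
      _ = 1 - (β:ℂ) := by rw [hgn]; push_cast; ring
  -- Part 2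
  have part2 : (Δ * (1 - ∑ i, ∑ k, μ i k * (μ i k)ᴴ)).trace = (β : ℂ) := by
    rw [hSig, Matrix.mul_sub, Matrix.mul_one, Matrix.mul_smul, hΔmulinv, trace_sub,
      trace_smul, hTrΔ, Matrix.trace_one, smul_eq_mul]
    simp only [Fintype.card_fin]
    rw [hgnC]
    ring
  -- the alpha facts
  set aC : ℂ := c * (α:ℝ) with haCdef
  have haC : ∀ k, (φ k)ᴴ * Δ⁻¹ * φ k = aC • 1 := by
    intro k
    have hsmulinv : (c • Δ)⁻¹ = c⁻¹ • Δ⁻¹ := by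
      apply Matrix.inv_eq_right_inv
      rw [Matrix.smul_mul, Matrix.mul_smul, smul_smul, hΔmulinv, mul_inv_cancel₀ hc, one_smul]
    have h := hα k
    rw [hsmulinv, Matrix.mul_smul, Matrix.smul_mul] at h
    have h2 := congrArg (fun M => c • M) h
    simp only [smul_smul, mul_inv_cancel₀ hc, one_smul] at h2
    rw [h2, haCdef]
  have hTrΔiρ : ∀ i k, (Δ⁻¹ * ρ i k).trace = aC * s := by
    intro i k
    have hUinvΔ' : U i * Δ⁻¹ * (U i)ᴴ = Δ⁻¹ := by
      rw [← hcommI, Matrix.mul_assoc, hUunit, Matrix.mul_one]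
    have step : Δ⁻¹ * ρ i k = U i * (Δ⁻¹ * (φ k * (φ k)ᴴ)) * (U i)ᴴ := by
      conv_lhs => rw [← hUinvΔ', hρ]
      simp only [Matrix.mul_assoc, hUl]
      rw [← Matrix.mul_assoc ((U i)ᴴ) (U i), hUl, Matrix.one_mul]
    rw [step, trace_mul_cycle, ← Matrix.mul_assoc, hUl, Matrix.one_mul, ← Matrix.mul_assoc,
      trace_mul_comm, ← Matrix.mul_assoc, haC k, trace_smul, Matrix.trace_one, smul_eq_mul]
    simp [Fintype.card_fin]
  have haCs : aC * s = n := by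
    have h1 : (Δ⁻¹ * (c • Δ)).trace = c * n := by
      rw [Matrix.mul_smul, hΔinvmul, trace_smul, Matrix.trace_one, smul_eq_mul]
      simp [Fintype.card_fin]
    have h2 : (Δ⁻¹ * ∑ i, ∑ k, ρ i k).trace = c * (aC * s) := by
      rw [Finset.mul_sum, trace_sum]
      calc ∑ i, (Δ⁻¹ * ∑ k, ρ i k).trace = ∑ i : Fin l, ∑ k : Fin r, (Δ⁻¹ * ρ i k).trace := by
            refine Finset.sum_congr rfl fun i _ => ?_
            rw [Finset.mul_sum, trace_sum]
        _ = ∑ i : Fin l, ∑ k : Fin r, (aC * s) := by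
            exact Finset.sum_congr rfl fun i _ => Finset.sum_congr rfl fun k _ => hTrΔiρ i k
        _ = c * (aC * s) := by simp [hcdef]; ring
    rw [hΔsum, h1] at h2
    exact (mul_left_cancel₀ hc h2.symm)
  -- real versions
  set aR : ℝ := ((l:ℝ) * (r:ℝ)) * α with haRdef
  have haCR : aC = ((aR:ℝ):ℂ) := by rw [haCdef, haRdef, hcdef]; push_cast; ring
  have hsR : (0:ℝ) < s := by exact_mod_cast hs
  have haRsR : aR * (s:ℝ) = (n:ℝ) := by
    have h := haCs
    rw [haCR] at h
    exact_mod_cast h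
  have haRpos : 0 < aR := by
    by_contra hcon
    push_neg at hcon
    have : aR * (s:ℝ) ≤ 0 := mul_nonpos_of_nonpos_of_nonneg hcon hsR.le
    rw [haRsR] at this
    linarith
  have hgnR : g * (n:ℝ) = 1 - β := by rw [hgdef, div_mul_cancel₀ _ hnR.ne']
  -- key PSD facts
  have hΔipsd : Δ⁻¹.PosSemidef := hΔpsd.inv
  have hUc : ∀ j (X : Matrix (Fin n) (Fin n) ℂ), (U j)ᴴ * (U j * X) = X := fun j X => by
    rw [← Matrix.mul_assoc, hUl, Matrix.one_mul]
  have hPid : ∀ k, (φ k * (φ k)ᴴ) * Δ⁻¹ * (φ k * (φ k)ᴴ) = aC • (φ k * (φ k)ᴴ) := by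
    intro k
    calc (φ k * (φ k)ᴴ) * Δ⁻¹ * (φ k * (φ k)ᴴ)
        = φ k * (((φ k)ᴴ * Δ⁻¹ * φ k) * (φ k)ᴴ) := by simp only [Matrix.mul_assoc]
      _ = aC • (φ k * (φ k)ᴴ) := by
          rw [haC k, Matrix.smul_mul, Matrix.one_mul, Matrix.mul_smul]
  have hstarA : star aC = aC := by rw [haCR]; simp [Complex.star_def, Complex.conj_ofReal]
  have hK0 : ∀ k, (aC • Δ - φ k * (φ k)ᴴ).PosSemidef := by
    intro k
    have hKherm : (aC • Δ - φ k * (φ k)ᴴ)ᴴ = aC • Δ - φ k * (φ k)ᴴ := by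
      rw [conjTranspose_sub, conjTranspose_smul, hΔH.eq,
        (posSemidef_self_mul_conjTranspose (φ k)).1.eq, hstarA]
    have e2 : (φ k * (φ k)ᴴ) * Δ⁻¹ * Δ = φ k * (φ k)ᴴ := by
      rw [Matrix.mul_assoc, hΔinvmul, Matrix.mul_one]
    have hid : (aC • Δ - φ k * (φ k)ᴴ) * Δ⁻¹ * (aC • Δ - φ k * (φ k)ᴴ)
        = aC • (aC • Δ - φ k * (φ k)ᴴ) := by
      simp only [Matrix.sub_mul, Matrix.mul_sub, Matrix.smul_mul, Matrix.mul_smul, hΔmulinv,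
        hΔinvmul, Matrix.one_mul, Matrix.mul_one, smul_sub, smul_smul, hPid, e2]
      abel
    have hpsd2 := hΔipsd.mul_mul_conjTranspose_same (aC • Δ - φ k * (φ k)ᴴ)
    rw [hKherm, hid] at hpsd2
    have h3 := psd_smul_real hpsd2 (inv_nonneg.mpr haRpos.le)
    rwa [smul_smul, show ((aR⁻¹:ℝ):ℂ) * aC = 1 from by
      rw [haCR, ← Complex.ofReal_mul, inv_mul_cancel₀ haRpos.ne', Complex.ofReal_one],
      one_smul] at h3
  have hK : ∀ i k, (aC • Δ - ρ i k).PosSemidef := by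
    intro i k
    have heq : U i * (aC • Δ - φ k * (φ k)ᴴ) * (U i)ᴴ = aC • Δ - ρ i k := by
      rw [Matrix.mul_sub, Matrix.sub_mul, Matrix.mul_smul, Matrix.smul_mul, hUΔ i, ← hρ i k]
    exact heq ▸ (hK0 k).mul_mul_conjTranspose_same (U i)
  -- conclusion
  refine ⟨part1, part2, ?_⟩
  intro N0 N hN0 hN hNsum hN0tr
  have hlrR : (0:ℝ) < (l:ℝ) * (r:ℝ) := by positivity
  have hterm : ∀ i k, ((ρ i k * N i k).trace).re ≤ (aC * (Δ * N i k).trace).re := by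
    intro i k
    have h0 : 0 ≤ ((aC • Δ - ρ i k) * N i k).trace := trace_mul_psd_nonneg (hK i k) (hN i k)
    rw [Matrix.sub_mul, trace_sub, Matrix.smul_mul, trace_smul, smul_eq_mul] at h0
    have h1 := (Complex.le_def.mp h0).1
    simp only [Complex.sub_re, Complex.zero_re] at h1
    linarith
  have hSN : ∑ i, ∑ k, N i k = 1 - N0 := eq_sub_of_add_eq' hNsum
  have hTrΔN : (Δ * (1 - N0)).trace = 1 - (β:ℂ) := by
    rw [Matrix.mul_sub, Matrix.mul_one, trace_sub, hTrΔ, hN0tr]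
  have hsumΔN : ∑ i, ∑ k, (Δ * N i k).trace = 1 - (β:ℂ) := by
    have e : (Δ * ∑ i, ∑ k, N i k).trace = ∑ i, ∑ k, (Δ * N i k).trace := by
      rw [Finset.mul_sum, trace_sum]
      exact Finset.sum_congr rfl fun i _ => by rw [Finset.mul_sum, trace_sum]
    rw [← e, hSN, hTrΔN]
  have hbound : ∑ i, ∑ k, ((ρ i k * N i k).trace).re ≤ aR * (1 - β) := by
    have h1 : ∑ i, ∑ k, ((ρ i k * N i k).trace).re
        ≤ ∑ i, ∑ k, (aC * (Δ * N i k).trace).re :=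
      Finset.sum_le_sum fun i _ => Finset.sum_le_sum fun k _ => hterm i k
    have h2 : ∑ i, ∑ k, aC * (Δ * N i k).trace = aC * (1 - (β:ℂ)) := by
      simp only [← Finset.mul_sum]
      rw [hsumΔN]
    have h3 : ∑ i, ∑ k, (aC * (Δ * N i k).trace).re = (aC * (1 - (β:ℂ))).re := by
      rw [← h2, Complex.re_sum]
      exact Finset.sum_congr rfl fun i _ => by rw [Complex.re_sum]
    have h4 : (aC * (1 - (β:ℂ))).re = aR * (1 - β) := by
      rw [haCR, show ((aR:ℝ):ℂ) * (1 - (β:ℂ)) = (((aR * (1 - β)):ℝ):ℂ) from by push_cast; ring,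
        Complex.ofReal_re]
    rw [h3, h4] at h1
    exact h1
  -- exact value for the SIM
  have hterm2 : ∀ i k, (ρ i k * (μ i k * (μ i k)ᴴ)).trace
      = (((g * aR^2 * s / ((l:ℝ)*(r:ℝ))) : ℝ) : ℂ) := by
    intro i k
    have hUinvΔ' : U i * Δ⁻¹ * (U i)ᴴ = Δ⁻¹ := by
      rw [← hcommI, Matrix.mul_assoc, hUunit, Matrix.mul_one]
    have hρΔ : ρ i k * Δ⁻¹ = U i * (φ k * (φ k)ᴴ * Δ⁻¹) * (U i)ᴴ := by
      rw [hρ]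
      simp only [Matrix.mul_assoc, hcommI']
    have hQ : (φ k * (φ k)ᴴ * Δ⁻¹) * (φ k * (φ k)ᴴ * Δ⁻¹) = aC • (φ k * (φ k)ᴴ * Δ⁻¹) := by
      calc (φ k * (φ k)ᴴ * Δ⁻¹) * (φ k * (φ k)ᴴ * Δ⁻¹)
          = ((φ k * (φ k)ᴴ) * Δ⁻¹ * (φ k * (φ k)ᴴ)) * Δ⁻¹ := by simp only [Matrix.mul_assoc]
        _ = aC • (φ k * (φ k)ᴴ * Δ⁻¹) := by rw [hPid k, Matrix.smul_mul]
    have hW : ρ i k * (Δ⁻¹ * ρ i k * Δ⁻¹)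
        = U i * ((aC • (φ k * (φ k)ᴴ * Δ⁻¹)) * (U i)ᴴ) := by
      calc ρ i k * (Δ⁻¹ * ρ i k * Δ⁻¹) = (ρ i k * Δ⁻¹) * (ρ i k * Δ⁻¹) := by
            simp only [Matrix.mul_assoc]
        _ = (U i * (φ k * (φ k)ᴴ * Δ⁻¹) * (U i)ᴴ) * (U i * (φ k * (φ k)ᴴ * Δ⁻¹) * (U i)ᴴ) := by
            rw [hρΔ]
        _ = U i * ((φ k * (φ k)ᴴ * Δ⁻¹) * (φ k * (φ k)ᴴ * Δ⁻¹) * (U i)ᴴ) := by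
            simp only [Matrix.mul_assoc, hUc]
        _ = U i * ((aC • (φ k * (φ k)ᴴ * Δ⁻¹)) * (U i)ᴴ) := by rw [hQ]
    have hTrW : ((φ k * (φ k)ᴴ) * Δ⁻¹).trace = aC * (s:ℂ) := by
      rw [trace_mul_comm, ← Matrix.mul_assoc, trace_mul_comm, ← Matrix.mul_assoc, haC k,
        trace_smul, Matrix.trace_one, smul_eq_mul]
      simp [Fintype.card_fin]
    have htr3 : (ρ i k * (Δ⁻¹ * ρ i k * Δ⁻¹)).trace = aC^2 * s := by
      rw [hW, ← Matrix.mul_assoc, trace_mul_cycle, hUl, Matrix.one_mul, trace_smul,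
        smul_eq_mul, hTrW]
      ring
    calc (ρ i k * (μ i k * (μ i k)ᴴ)).trace
        = (((g:ℝ):ℂ) * (1/c)) * (ρ i k * (Δ⁻¹ * ρ i k * Δ⁻¹)).trace := by
          rw [hμμ i k, hψψ i k]
          simp only [Matrix.mul_smul, Matrix.smul_mul, smul_smul, trace_smul, smul_eq_mul]
      _ = (((g:ℝ):ℂ) * (1/c)) * (aC^2 * s) := by rw [htr3]
      _ = (((g * aR^2 * s / ((l:ℝ)*(r:ℝ))) : ℝ) : ℂ) := by
          rw [haCR, hcdef]; push_cast; ring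
  have hsum2 : ∑ i, ∑ k, ((ρ i k * (μ i k * (μ i k)ᴴ)).trace).re
      = (l:ℝ)*(r:ℝ) * (g * aR^2 * s / ((l:ℝ)*(r:ℝ))) := by
    have h5 : ∀ i k, ((ρ i k * (μ i k * (μ i k)ᴴ)).trace).re
        = g * aR^2 * s / ((l:ℝ)*(r:ℝ)) := by
      intro i k; rw [hterm2 i k, Complex.ofReal_re]
    simp only [h5, Finset.sum_const, Finset.card_univ, Fintype.card_fin, nsmul_eq_mul]
    push_cast; ring
  have key : (l:ℝ)*(r:ℝ) * (g * aR^2 * s / ((l:ℝ)*(r:ℝ))) = aR * (1 - β) := by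
    rw [mul_comm ((l:ℝ)*(r:ℝ)), div_mul_cancel₀ _ hlrR.ne']
    have h6 : g * aR^2 * (s:ℝ) = g * (aR * s) * aR := by ring
    rw [h6, haRsR, hgnR]
    ring
  calc (1 / (l * r) : ℝ) * ∑ i, ∑ k, ((ρ i k * N i k).trace).re
      ≤ (1 / ((l:ℝ) * (r:ℝ))) * (aR * (1 - β)) := by
        exact mul_le_mul_of_nonneg_left hbound (by positivity)
    _ = (1 / (l * r) : ℝ) * ∑ i, ∑ k, ((ρ i k * (μ i k * (μ i k)ᴴ)).trace).re := by
        rw [hsum2, key]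
end
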